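/- (Scaling of the auxiliary singular integral.) Let α ∈ (0,2). For x > 0 define F(x) as the principal value F(x) := lim_{ε→0⁺} ∫_{{y ∈ (0,∞) : |y-x| > ε}} (x^{-α/2} - y^{-α/2})/|x-y|^{1+α} dy. Then for every x > 0 this limit exists and is finite, and the scaling identity F(λx) = λ^{-3α/2} F(x) holds for all λ > 0 and all x > 0. Consequently F(x) = F(1) · x^{-3α/2} for all x > 0. -/

import Mathlib

open MeasureTheory Filter Topology Set Pointwise

/-- The principal value
`F(x) = lim_{ε→0⁺} ∫_{{y ∈ (0,∞) : |y-x| > ε}} (x^{-α/2} - y^{-α/2})/|x-y|^{1+α} dy`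
exists and equals `L`. -/
def auxFPV (α x L : ℝ) : Prop :=
  Tendsto (fun ε : ℝ =>
      ∫ y in {y : ℝ | 0 < y ∧ ε < |y - x|},
        (x ^ (-(α / 2)) - y ^ (-(α / 2))) / |x - y| ^ (1 + α))
    (𝓝[>] (0 : ℝ)) (𝓝 L)

noncomputable def fI (α x y : ℝ) : ℝ :=
  (x ^ (-(α / 2)) - y ^ (-(α / 2))) / |x - y| ^ (1 + α)

lemma measurable_fI (α x : ℝ) : Measurable (fI α x) := by
  unfold fI; fun_prop

lemma measurableSet_S (x ε : ℝ) : MeasurableSet {y : ℝ | 0 < y ∧ ε < |y - x|} := by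
  have : {y : ℝ | 0 < y ∧ ε < |y - x|}
      = Ioi 0 ∩ {y : ℝ | ε < |y - x|} := rfl
  rw [this]
  exact measurableSet_Ioi.inter
    (measurableSet_lt measurable_const ((measurable_id.sub_const x).abs))

/-- Quadratic Taylor-type bound for the symmetrized difference. -/
lemma Phi_bound {α x : ℝ} (hα1 : 0 < α) (hx : 0 < x) :
    ∀ t ∈ Icc (0:ℝ) (x/2),
      |2 * x ^ (-(α/2)) - (x+t) ^ (-(α/2)) - (x-t) ^ (-(α/2))|
        ≤ ((α/2) * (α/2+1) * (x/2) ^ (-(α/2) - 2)) * t^2 := by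
  set p : ℝ := -(α/2) with hp
  set K : ℝ := (α/2) * (α/2+1) * (x/2) ^ (p - 2) with hK
  have hK0 : 0 ≤ K := by
    apply mul_nonneg (by positivity) (Real.rpow_nonneg (by positivity) _)
  set u : ℝ → ℝ := fun s => p * s ^ (p - 1) with hu
  -- mean value bound for u on intervals to the right of x/2
  have huMVT : ∀ c d : ℝ, x/2 ≤ c → c ≤ d → |u d - u c| ≤ K * (d - c) := by
    intro c d hc hcd
    have hder : ∀ s ∈ Icc c d, HasDerivWithinAt u (p * (p-1) * s ^ (p - 2)) (Icc c d) s := by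
      intro s hs
      have hs0 : 0 < s := lt_of_lt_of_le (by linarith [half_pos hx]) hs.1
      have h1 : HasDerivAt (fun s : ℝ => s ^ (p-1)) ((p-1) * s ^ (p-1-1)) s :=
        Real.hasDerivAt_rpow_const (Or.inl hs0.ne')
      have h2 := h1.const_mul p
      have : p * ((p-1) * s ^ (p-1-1)) = p * (p-1) * s ^ (p - 2) := by
        rw [show p - 1 - 1 = p - 2 by ring]; ring
      rw [this] at h2
      exact h2.hasDerivWithinAt
    have hbd : ∀ s ∈ Ico c d, ‖p * (p-1) * s ^ (p - 2)‖ ≤ K := by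
      intro s hs
      have hs0 : x/2 ≤ s := le_trans hc hs.1
      have hx2 : 0 < x/2 := half_pos hx
      rw [Real.norm_eq_abs, abs_mul, abs_of_nonneg (Real.rpow_nonneg (by linarith) _)]
      have h1 : |p * (p-1)| = (α/2) * (α/2+1) := by
        rw [hp, abs_of_nonneg] <;> nlinarith
      rw [h1, hK]
      have h2 : s ^ (p - 2) ≤ (x/2) ^ (p - 2) :=
        Real.rpow_le_rpow_of_nonpos hx2 hs0 (by rw [hp]; linarith)
      exact mul_le_mul_of_nonneg_left h2 (by positivity)
    have := norm_image_sub_le_of_norm_deriv_le_segment' hder hbd d ⟨hcd, le_refl d⟩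
    simpa [Real.norm_eq_abs] using this
  set Φ : ℝ → ℝ := fun t => 2 * x ^ p - (x+t) ^ p - (x-t) ^ p with hΦ
  have hΦder : ∀ t ∈ Icc (0:ℝ) (x/2), HasDerivAt Φ (u (x-t) - u (x+t)) t := by
    intro t ht
    have hxt1 : 0 < x + t := by have := ht.1; linarith
    have hxt2 : 0 < x - t := by have := ht.2; linarith
    have h1 : HasDerivAt (fun t : ℝ => (x+t) ^ p) (p * (x+t) ^ (p-1)) t := by
      have ha : HasDerivAt (fun t : ℝ => x + t) 1 t := (hasDerivAt_id t).const_add x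
      have hb : HasDerivAt (fun s : ℝ => s ^ p) (p * (x+t) ^ (p-1)) (x+t) := by
        simpa [mul_comm] using Real.hasDerivAt_rpow_const (x := x+t) (p := p) (Or.inl hxt1.ne')
      have := hb.comp t ha
      rw [mul_one] at this
      exact this
    have h2 : HasDerivAt (fun t : ℝ => (x-t) ^ p) (-(p * (x-t) ^ (p-1))) t := by
      have ha : HasDerivAt (fun t : ℝ => x - t) (-1) t := (hasDerivAt_id t).const_sub x
      have hb : HasDerivAt (fun s : ℝ => s ^ p) (p * (x-t) ^ (p-1)) (x-t) := by
        simpa [mul_comm] using Real.hasDerivAt_rpow_const (x := x-t) (p := p) (Or.inl hxt2.ne')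
      have := hb.comp t ha
      rw [mul_neg_one] at this
      exact this
    have h3 := ((hasDerivAt_const t (2 * x ^ p)).sub h1).sub h2
    exact h3.congr_deriv (by rw [hu]; ring)
  have hcont : ContinuousOn Φ (Icc 0 (x/2)) :=
    fun t ht => (hΦder t ht).continuousAt.continuousWithinAt
  have hB : ∀ t : ℝ, HasDerivAt (fun t : ℝ => K * t^2) (K * (2 * t)) t := by
    intro t
    have := (hasDerivAt_pow 2 t).const_mul K
    simpa using this
  have hbound : ∀ t ∈ Ico (0:ℝ) (x/2), ‖u (x-t) - u (x+t)‖ ≤ K * (2 * t) := by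
    intro t ht
    have h := huMVT (x - t) (x + t) (by have := ht.2; linarith) (by have := ht.1; linarith)
    rw [Real.norm_eq_abs]
    calc |u (x-t) - u (x+t)| = |u (x+t) - u (x-t)| := abs_sub_comm _ _
      _ ≤ K * ((x+t) - (x-t)) := h
      _ = K * (2 * t) := by ring
  have ha : ‖Φ 0‖ ≤ K * (0:ℝ)^2 := by
    have : Φ 0 = 0 := by simp [hΦ]; ring
    rw [this]; simp
  have := image_norm_le_of_norm_deriv_right_le_deriv_boundary hcont
    (fun t ht => (hΦder t (Ico_subset_Icc_self ht)).hasDerivWithinAt) ha hB hbound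
  intro t ht
  have h := this ht
  rw [Real.norm_eq_abs] at h
  simpa [hΦ, hp, hK] using h

lemma abs_fI_le {α x y n d : ℝ} (hd0 : 0 < d) (hd : d ≤ |x - y| ^ (1 + α))
    (hn : |x ^ (-(α/2)) - y ^ (-(α/2))| ≤ n) : |fI α x y| ≤ n / d := by
  unfold fI
  rw [abs_div, abs_of_nonneg (Real.rpow_nonneg (abs_nonneg _) _)]
  exact div_le_div₀ (le_trans (abs_nonneg _) hn) hn hd0 hd

lemma abs_sub_le' (a b : ℝ) : |a - b| ≤ |a| + |b| := by
  rw [sub_eq_add_neg]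
  exact (abs_add_le _ _).trans (by rw [abs_neg])


lemma scale_int (α : ℝ) {lam x ε : ℝ} (hlam : 0 < lam) (hx : 0 < x) :
    ∫ y in {y : ℝ | 0 < y ∧ lam * ε < |y - lam * x|}, fI α (lam * x) y
      = lam ^ (-(3 * α / 2)) * ∫ z in {z : ℝ | 0 < z ∧ ε < |z - x|}, fI α x z := by
  set S : Set ℝ := {z : ℝ | 0 < z ∧ ε < |z - x|} with hSdef
  set S' : Set ℝ := {y : ℝ | 0 < y ∧ lam * ε < |y - lam * x|} with hS'def
  have hS : MeasurableSet S := measurableSet_S x ε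
  have hS' : MeasurableSet S' := measurableSet_S (lam * x) (lam * ε)
  have hpre : (fun z : ℝ => lam * z) ⁻¹' S' = S := by
    ext z
    simp only [hS'def, hSdef, mem_preimage, mem_setOf_eq]
    constructor
    · rintro ⟨h1, h2⟩
      refine ⟨by nlinarith, ?_⟩
      have : lam * z - lam * x = lam * (z - x) := by ring
      rw [this, abs_mul, abs_of_pos hlam] at h2
      exact lt_of_mul_lt_mul_left h2 hlam.le
    · rintro ⟨h1, h2⟩
      refine ⟨mul_pos hlam h1, ?_⟩
      have : lam * z - lam * x = lam * (z - x) := by ring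
      rw [this, abs_mul, abs_of_pos hlam]
      exact mul_lt_mul_of_pos_left h2 hlam
  have hsmul : (lam • S : Set ℝ) = S' := by
    rw [← hpre]
    ext y
    simp only [Set.mem_smul_set, smul_eq_mul]
    constructor
    · rintro ⟨z, hz, rfl⟩; exact hz
    · intro hy; exact ⟨lam⁻¹ * y, by simpa [← mul_assoc, mul_inv_cancel₀ hlam.ne'] using hy,
        by field_simp⟩
  have key := MeasureTheory.Measure.setIntegral_comp_smul_of_pos (volume) (fI α (lam * x)) S hlam
  simp only [smul_eq_mul, Module.finrank_self, pow_one, hsmul] at key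
  have hLHS : ∫ y in S', fI α (lam * x) y
      = lam * ∫ z in S, fI α (lam * x) (lam * z) := by
    rw [key, ← mul_assoc, mul_inv_cancel₀ hlam.ne', one_mul]
  have hpt : ∀ z ∈ S, fI α (lam * x) (lam * z)
      = lam ^ (-(α/2) - (1 + α)) * fI α x z := by
    intro z hz
    have hz0 : 0 < z := hz.1
    unfold fI
    have h1 : (lam * x) ^ (-(α/2)) = lam ^ (-(α/2)) * x ^ (-(α/2)) :=
      Real.mul_rpow hlam.le hx.le
    have h2 : (lam * z) ^ (-(α/2)) = lam ^ (-(α/2)) * z ^ (-(α/2)) :=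
      Real.mul_rpow hlam.le hz0.le
    have h3 : |lam * x - lam * z| = lam * |x - z| := by
      rw [show lam * x - lam * z = lam * (x - z) by ring, abs_mul, abs_of_pos hlam]
    have h4 : (lam * |x - z|) ^ (1 + α) = lam ^ (1 + α) * |x - z| ^ (1 + α) :=
      Real.mul_rpow hlam.le (abs_nonneg _)
    rw [h1, h2, h3, h4, ← mul_sub, mul_div_mul_comm, Real.rpow_sub hlam]
  have hRHS : ∫ z in S, fI α (lam * x) (lam * z)
      = lam ^ (-(α/2) - (1 + α)) * ∫ z in S, fI α x z := by
    rw [setIntegral_congr_fun hS (fun z hz => hpt z hz)]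
    exact MeasureTheory.integral_const_mul _ _
  rw [hLHS, hRHS, ← mul_assoc]
  congr 1
  have : lam * lam ^ (-(α/2) - (1 + α)) = lam ^ ((1:ℝ) + (-(α/2) - (1 + α))) := by
    rw [Real.rpow_add hlam, Real.rpow_one]
  rw [this]
  congr 1
  ring

lemma exists_pv (α : ℝ) (hα : 0 < α ∧ α < 2) {x : ℝ} (hx : 0 < x) :
    ∃ L : ℝ, auxFPV α x L := by
  obtain ⟨hα1, hα2⟩ := hα
  have hx2 : 0 < x/2 := half_pos hx
  set p : ℝ := -(α/2) with hpdef
  have hp1 : -1 < p := by rw [hpdef]; linarith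
  have hp0 : p ≤ 0 := by rw [hpdef]; linarith
  set K : ℝ := (α/2) * (α/2+1) * (x/2) ^ (p - 2) with hKdef
  have hK0 : 0 ≤ K := mul_nonneg (by positivity) (Real.rpow_nonneg hx2.le _)
  have hmeas := measurable_fI α x
  -- the symmetrized function
  set φ : ℝ → ℝ := fun t => fI α x (x + t) + fI α x (x - t) with hφdef
  have hφmeas : Measurable φ :=
    (hmeas.comp (measurable_const.add measurable_id)).add
      (hmeas.comp (measurable_const.sub measurable_id))
  -- pointwise bound for φ
  have hφ_bound : ∀ t ∈ Ioc (0:ℝ) (x/2), |φ t| ≤ K * t ^ (1 - α) := by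
    intro t ht
    have ht0 : 0 < t := ht.1
    have hφeq : φ t = (2 * x ^ p - (x+t) ^ p - (x-t) ^ p) / t ^ (1 + α) := by
      rw [hφdef]
      simp only
      unfold fI
      have e1 : |x - (x + t)| = t := by
        rw [show x - (x + t) = -t by ring, abs_neg, abs_of_pos ht0]
      have e2 : |x - (x - t)| = t := by
        rw [show x - (x - t) = t by ring, abs_of_pos ht0]
      rw [e1, e2, ← add_div]
      congr 1
      ring
    rw [hφeq, abs_div, abs_of_nonneg (Real.rpow_nonneg ht0.le _)]
    have hnum := Phi_bound hα1 hx t ⟨ht0.le, ht.2⟩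
    have hden : (0:ℝ) < t ^ (1 + α) := Real.rpow_pos_of_pos ht0 _
    calc |2 * x ^ p - (x+t) ^ p - (x-t) ^ p| / t ^ (1+α)
        ≤ (K * t^2) / t ^ (1+α) := by gcongr
      _ = K * t ^ (1 - α) := by
          rw [mul_div_assoc]
          congr 1
          rw [← Real.rpow_natCast t 2, ← Real.rpow_sub ht0]
          congr 1
          push_cast
          ring
  -- integrability of t ↦ t^(1-α) and of φ near 0
  have hrpow_int : IntegrableOn (fun t : ℝ => t ^ (1 - α)) (Ioc 0 (x/2)) := by
    have := intervalIntegral.intervalIntegrable_rpow' (a := 0) (b := x/2)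
      (by linarith : (-1:ℝ) < 1 - α)
    rwa [intervalIntegrable_iff_integrableOn_Ioc_of_le hx2.le] at this
  have hφ_int : IntegrableOn φ (Ioc 0 (x/2)) := by
    apply Integrable.mono' (hrpow_int.const_mul K) (hφmeas.aestronglyMeasurable.restrict)
    rw [ae_restrict_iff' measurableSet_Ioc]
    filter_upwards with t ht
    rw [Real.norm_eq_abs]
    exact hφ_bound t ht
  -- generic denominator monotonicity
  have habs_den : ∀ {y d : ℝ}, 0 ≤ d → d ≤ |x - y| → d ^ (1+α) ≤ |x - y| ^ (1+α) :=
    fun hd hle => Real.rpow_le_rpow hd hle (by linarith)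
  have hnum_le : ∀ {y n : ℝ}, 0 ≤ y → y ^ p ≤ n → |x ^ p - y ^ p| ≤ x ^ p + n := by
    intro y n hy hn
    calc |x ^ p - y ^ p| ≤ |x ^ p| + |y ^ p| := abs_sub_le' _ _
      _ = x ^ p + y ^ p := by
          rw [abs_of_nonneg (Real.rpow_nonneg hx.le _), abs_of_nonneg (Real.rpow_nonneg hy _)]
      _ ≤ x ^ p + n := by linarith
  -- integrability on the two outer pieces
  have hint_Ioo : IntegrableOn (fI α x) (Ioo 0 (x/2)) := by
    have h2 : IntegrableOn (fun y : ℝ => y ^ p) (Ioo 0 (x/2)) := by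
      have := intervalIntegral.intervalIntegrable_rpow' (a := 0) (b := x/2) hp1
      rw [intervalIntegrable_iff_integrableOn_Ioc_of_le hx2.le] at this
      exact this.mono_set Ioo_subset_Ioc_self
    have h1 : IntegrableOn (fun _ : ℝ => x ^ p) (Ioo 0 (x/2)) :=
      integrableOn_const (by rw [Real.volume_Ioo]; exact ENNReal.ofReal_ne_top)
    have hg : IntegrableOn (fun y : ℝ => (x ^ p + y ^ p) / (x/2) ^ (1+α)) (Ioo 0 (x/2)) :=
      (h1.add h2).div_const _
    apply Integrable.mono' hg (hmeas.aestronglyMeasurable.restrict)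
    rw [ae_restrict_iff' measurableSet_Ioo]
    filter_upwards with y hy
    rw [Real.norm_eq_abs]
    apply abs_fI_le (Real.rpow_pos_of_pos hx2 _) (habs_den hx2.le ?_)
      (hnum_le hy.1.le (le_refl _))
    rw [abs_of_pos (by linarith [hy.2] : (0:ℝ) < x - y)]
    linarith [hy.2]
  have hint_Ioi : IntegrableOn (fI α x) (Ioi (3*x/2)) := by
    have h32 : (0:ℝ) < 3*x/2 := by linarith
    have hg : IntegrableOn
        (fun y : ℝ => ((x ^ p + (3*x/2) ^ p) * 3 ^ (1+α)) * y ^ (-(1+α))) (Ioi (3*x/2)) :=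
      (integrableOn_Ioi_rpow_of_lt (by linarith) h32).const_mul _
    apply Integrable.mono' hg (hmeas.aestronglyMeasurable.restrict)
    rw [ae_restrict_iff' measurableSet_Ioi]
    filter_upwards with y hy
    rw [Real.norm_eq_abs]
    have hy3 : 3*x/2 < y := hy
    have hy0 : 0 < y := lt_trans h32 hy3
    have key : |fI α x y| ≤ (x ^ p + (3*x/2) ^ p) / (y/3) ^ (1+α) := by
      apply abs_fI_le (Real.rpow_pos_of_pos (by linarith) _) (habs_den (by linarith) ?_)
        (hnum_le hy0.le (Real.rpow_le_rpow_of_nonpos h32 hy3.le hp0))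
      rw [abs_of_neg (by linarith : x - y < 0)]
      linarith
    refine key.trans (le_of_eq ?_)
    rw [Real.div_rpow hy0.le (by norm_num : (0:ℝ) ≤ 3), div_div_eq_mul_div,
      Real.rpow_neg hy0.le, ← div_eq_mul_inv]
  -- constant-bound integrability helper
  have hconst_int : ∀ (f : ℝ → ℝ) (s : Set ℝ) (C : ℝ), Measurable f → MeasurableSet s →
      volume s < ⊤ → (∀ y ∈ s, |f y| ≤ C) → IntegrableOn f s := by
    intro f s C hf hs hsf hb
    apply Integrable.mono' (integrableOn_const (C := C) hsf.ne)
      (hf.aestronglyMeasurable.restrict)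
    rw [ae_restrict_iff' hs]
    filter_upwards with y hy
    rw [Real.norm_eq_abs]
    exact hb y hy
  -- set decomposition
  have hdecomp : ∀ ε : ℝ, 0 < ε → ε < x/2 →
      {y : ℝ | 0 < y ∧ ε < |y - x|}
        = (Ioo 0 (x/2) ∪ Ioi (3*x/2)) ∪ (Ico (x/2) (x-ε) ∪ Ioc (x+ε) (3*x/2)) := by
    intro ε hε hεx
    ext y
    simp only [mem_setOf_eq, lt_abs, mem_union, mem_Ioo, mem_Ioi, mem_Ico, mem_Ioc]
    constructor
    · rintro ⟨h0, h | h⟩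
      · rcases le_or_gt y (3*x/2) with h3 | h3
        · exact Or.inr (Or.inr ⟨by linarith, h3⟩)
        · exact Or.inl (Or.inr h3)
      · rcases lt_or_ge y (x/2) with h3 | h3
        · exact Or.inl (Or.inl ⟨h0, h3⟩)
        · exact Or.inr (Or.inl ⟨h3, by linarith⟩)
    · rintro ((⟨h1, h2⟩ | h1) | (⟨h1, h2⟩ | ⟨h1, h2⟩))
      · exact ⟨h1, Or.inr (by linarith)⟩
      · exact ⟨by linarith, Or.inl (by linarith)⟩
      · exact ⟨by linarith, Or.inr (by linarith)⟩
      · exact ⟨by linarith, Or.inl (by linarith)⟩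
  set A : ℝ := ∫ y in (Ioo 0 (x/2) ∪ Ioi (3*x/2)), fI α x y with hA
  set M : ℝ := ∫ t in Ioc 0 (x/2), φ t with hM
  refine ⟨A + M, ?_⟩
  show Tendsto (fun ε : ℝ => ∫ y in {y : ℝ | 0 < y ∧ ε < |y - x|}, fI α x y)
    (𝓝[>] (0:ℝ)) (𝓝 (A + M))
  -- identification of the truncated integral
  have hG : ∀ ε ∈ Ioo (0:ℝ) (x/2),
      (∫ y in {y : ℝ | 0 < y ∧ ε < |y - x|}, fI α x y)
        = A + ∫ t in Ioc ε (x/2), φ t := by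
    intro ε hε
    obtain ⟨hε0, hεx⟩ := hε
    have hCb : (0:ℝ) < (x ^ p + (x/2) ^ p) / ε ^ (1+α) := by
      apply div_pos (by positivity) (Real.rpow_pos_of_pos hε0 _)
    have hIco : IntegrableOn (fI α x) (Ico (x/2) (x-ε)) := by
      apply hconst_int _ _ _ hmeas measurableSet_Ico
        (by rw [Real.volume_Ico]; exact ENNReal.ofReal_lt_top)
      intro y hy
      apply abs_fI_le (Real.rpow_pos_of_pos hε0 _) (habs_den hε0.le ?_)
        (hnum_le (by linarith [hy.1] : (0:ℝ) ≤ y)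
          (Real.rpow_le_rpow_of_nonpos hx2 hy.1 hp0))
      rw [abs_of_pos (by linarith [hy.2] : (0:ℝ) < x - y)]
      linarith [hy.2]
    have hIoc : IntegrableOn (fI α x) (Ioc (x+ε) (3*x/2)) := by
      apply hconst_int _ _ _ hmeas measurableSet_Ioc
        (by rw [Real.volume_Ioc]; exact ENNReal.ofReal_lt_top)
      intro y hy
      apply abs_fI_le (Real.rpow_pos_of_pos hε0 _) (habs_den hε0.le ?_)
        (hnum_le (by linarith [hy.1] : (0:ℝ) ≤ y)
          (Real.rpow_le_rpow_of_nonpos hx2 (by linarith [hy.1]) hp0))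
      rw [abs_of_neg (by linarith [hy.1] : x - y < 0)]
      linarith [hy.1]
    have hplus : IntegrableOn (fun t : ℝ => fI α x (x + t)) (Ioc ε (x/2)) := by
      apply hconst_int _ _ ((x ^ p + (x/2) ^ p) / ε ^ (1+α))
        (hmeas.comp (measurable_const.add measurable_id)) measurableSet_Ioc
        (by rw [Real.volume_Ioc]; exact ENNReal.ofReal_lt_top)
      intro t ht
      apply abs_fI_le (Real.rpow_pos_of_pos hε0 _) (habs_den hε0.le ?_)
        (hnum_le (by linarith [ht.1] : (0:ℝ) ≤ x + t)
          (Real.rpow_le_rpow_of_nonpos hx2 (by linarith [ht.1]) hp0))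
      rw [show x - (x + t) = -t by ring, abs_neg, abs_of_pos (by linarith [ht.1] : (0:ℝ) < t)]
      exact ht.1.le
    have hminus : IntegrableOn (fun t : ℝ => fI α x (x - t)) (Ioc ε (x/2)) := by
      apply hconst_int _ _ ((x ^ p + (x/2) ^ p) / ε ^ (1+α))
        (hmeas.comp (measurable_const.sub measurable_id)) measurableSet_Ioc
        (by rw [Real.volume_Ioc]; exact ENNReal.ofReal_lt_top)
      intro t ht
      apply abs_fI_le (Real.rpow_pos_of_pos hε0 _) (habs_den hε0.le ?_)
        (hnum_le (by linarith [ht.2] : (0:ℝ) ≤ x - t)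
          (Real.rpow_le_rpow_of_nonpos hx2 (by linarith [ht.2]) hp0))
      rw [show x - (x - t) = t by ring, abs_of_pos (by linarith [ht.1] : (0:ℝ) < t)]
      exact ht.1.le
    have e1 : ∫ t in Ioc ε (x/2), fI α x (x - t) = ∫ y in Ico (x/2) (x-ε), fI α x y := by
      rw [setIntegral_congr_set Ico_ae_eq_Ioc]
      rw [← intervalIntegral.integral_of_le hεx.le,
        ← intervalIntegral.integral_of_le (by linarith : x/2 ≤ x - ε)]
      rw [intervalIntegral.integral_comp_sub_left (fun y => fI α x y) x]
      congr 1
      ring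
    have e2 : ∫ t in Ioc ε (x/2), fI α x (x + t) = ∫ y in Ioc (x+ε) (3*x/2), fI α x y := by
      rw [← intervalIntegral.integral_of_le hεx.le,
        ← intervalIntegral.integral_of_le (by linarith : x + ε ≤ 3*x/2)]
      rw [intervalIntegral.integral_comp_add_left (fun y => fI α x y) x]
      congr 1
      ring
    have htrans : ∫ t in Ioc ε (x/2), φ t
        = (∫ y in Ico (x/2) (x-ε), fI α x y) + ∫ y in Ioc (x+ε) (3*x/2), fI α x y := by
      rw [← e1, ← e2]
      simp only [hφdef]
      rw [integral_add hplus hminus, add_comm]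
    have hdisj1 : Disjoint (Ioo (0:ℝ) (x/2) ∪ Ioi (3*x/2))
        (Ico (x/2) (x-ε) ∪ Ioc (x+ε) (3*x/2)) := by
      rw [Set.disjoint_left]
      rintro y (⟨h1, h2⟩ | (h1 : 3*x/2 < y)) (⟨h3, h4⟩ | ⟨h3, h4⟩) <;> linarith
    have hdisj2 : Disjoint (Ico (x/2) (x-ε)) (Ioc (x+ε) (3*x/2)) := by
      rw [Set.disjoint_left]
      rintro y ⟨h1, h2⟩ ⟨h3, h4⟩
      linarith
    rw [hdecomp ε hε0 hεx,
      setIntegral_union hdisj1 (measurableSet_Ico.union measurableSet_Ioc)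
        (hint_Ioo.union hint_Ioi) (hIco.union hIoc),
      setIntegral_union hdisj2 measurableSet_Ioc hIco hIoc, htrans, ← hA]
  -- the error bound
  have hsub : ∀ ε ∈ Ioo (0:ℝ) (x/2),
      |(A + ∫ t in Ioc ε (x/2), φ t) - (A + M)| ≤ (K / (2-α)) * ε ^ (2-α) := by
    intro ε hε
    have hsplit : M = (∫ t in Ioc 0 ε, φ t) + ∫ t in Ioc ε (x/2), φ t := by
      rw [hM, ← Ioc_union_Ioc_eq_Ioc hε.1.le hε.2.le,
        setIntegral_union (Ioc_disjoint_Ioc_of_le le_rfl) measurableSet_Ioc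
          (hφ_int.mono_set (Ioc_subset_Ioc_right hε.2.le))
          (hφ_int.mono_set (Ioc_subset_Ioc_left hε.1.le))]
    have h1 : (A + ∫ t in Ioc ε (x/2), φ t) - (A + M) = -(∫ t in Ioc 0 ε, φ t) := by
      rw [hsplit]; ring
    rw [h1, abs_neg]
    have h2 : |∫ t in Ioc 0 ε, φ t| ≤ ∫ t in Ioc 0 ε, K * t ^ (1-α) := by
      rw [← Real.norm_eq_abs]
      refine (norm_integral_le_integral_norm φ).trans ?_
      apply setIntegral_mono_on ((hφ_int.mono_set (Ioc_subset_Ioc_right hε.2.le)).norm)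
        ((hrpow_int.mono_set (Ioc_subset_Ioc_right hε.2.le)).const_mul K) measurableSet_Ioc
      intro t ht
      rw [Real.norm_eq_abs]
      exact hφ_bound t ⟨ht.1, le_trans ht.2 hε.2.le⟩
    refine h2.trans (le_of_eq ?_)
    rw [← intervalIntegral.integral_of_le hε.1.le, intervalIntegral.integral_const_mul,
      integral_rpow (Or.inl (by linarith : (-1:ℝ) < 1-α)),
      Real.zero_rpow (by intro h; linarith [h] : (1:ℝ) - α + 1 ≠ 0),
      show (1:ℝ) - α + 1 = 2 - α by ring]
    ring
  -- pass to the limit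
  have hε_mem : Ioo (0:ℝ) (x/2) ∈ 𝓝[>] (0:ℝ) :=
    Ioo_mem_nhdsGT hx2
  have hC0 : Tendsto (fun ε : ℝ => (K/(2-α)) * ε ^ ((2:ℝ)-α)) (𝓝[>] (0:ℝ)) (𝓝 0) := by
    have hc : ContinuousAt (fun ε : ℝ => ε ^ ((2:ℝ)-α)) 0 :=
      Real.continuousAt_rpow_const 0 (2-α) (Or.inr (by linarith))
    have h0 : (0:ℝ) ^ ((2:ℝ)-α) = 0 :=
      Real.zero_rpow (by intro h; linarith [h] : (2:ℝ) - α ≠ 0)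
    have h1 : Tendsto (fun ε : ℝ => ε ^ ((2:ℝ)-α)) (𝓝[>] (0:ℝ)) (𝓝 ((0:ℝ) ^ ((2:ℝ)-α))) :=
      hc.tendsto.mono_left nhdsWithin_le_nhds
    have := h1.const_mul (K/(2-α))
    rw [h0, mul_zero] at this
    exact this
  have hdiff0 : Tendsto (fun ε : ℝ =>
      (∫ y in {y : ℝ | 0 < y ∧ ε < |y - x|}, fI α x y) - (A + M)) (𝓝[>] (0:ℝ)) (𝓝 0) := by
    apply squeeze_zero_norm' ?_ hC0
    filter_upwards [hε_mem] with ε hε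
    rw [Real.norm_eq_abs, hG ε hε]
    exact hsub ε hε
  have := hdiff0.add_const (A + M)
  simpa using this


/-- PV scales. -/
lemma pv_scale (α : ℝ) {lam x L : ℝ} (hlam : 0 < lam) (hx : 0 < x)
    (hL : auxFPV α x L) : auxFPV α (lam * x) (lam ^ (-(3 * α / 2)) * L) := by
  have hdiv : Tendsto (fun ε : ℝ => ε / lam) (𝓝[>] (0 : ℝ)) (𝓝[>] (0 : ℝ)) := by
    apply tendsto_nhdsWithin_of_tendsto_nhds_of_eventually_within
    · have := (tendsto_id (x := 𝓝 (0:ℝ))).div_const lam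
      simpa using this.mono_left nhdsWithin_le_nhds
    · filter_upwards [self_mem_nhdsWithin] with ε (hε : 0 < ε)
      exact div_pos hε hlam
  have hcomp := (hL.const_mul (lam ^ (-(3 * α / 2)))).comp hdiv
  unfold auxFPV
  refine hcomp.congr' ?_
  filter_upwards [self_mem_nhdsWithin] with ε (hε : 0 < ε)
  have h1 : lam * (ε / lam) = ε := by field_simp
  have := scale_int α (ε := ε / lam) hlam hx
  rw [h1] at this
  simpa [fI, Function.comp] using this.symm

theorem stmt6 (α : ℝ) (hα : 0 < α ∧ α < 2) :
    (∀ x : ℝ, 0 < x → ∃ L : ℝ, auxFPV α x L) ∧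
    ∀ F : ℝ → ℝ, (∀ x : ℝ, 0 < x → auxFPV α x (F x)) →
      (∀ lam : ℝ, 0 < lam → ∀ x : ℝ, 0 < x →
        F (lam * x) = lam ^ (-(3 * α / 2)) * F x) ∧
      (∀ x : ℝ, 0 < x → F x = F 1 * x ^ (-(3 * α / 2))) := by
  refine ⟨fun x hx => exists_pv α hα hx, fun F hF => ?_⟩
  have key : ∀ lam : ℝ, 0 < lam → ∀ x : ℝ, 0 < x →
      F (lam * x) = lam ^ (-(3 * α / 2)) * F x := by
    intro lam hlam x hx
    exact tendsto_nhds_unique (hF _ (mul_pos hlam hx)) (pv_scale α hlam hx (hF x hx))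
  refine ⟨key, fun x hx => ?_⟩
  have := key x hx 1 one_pos
  rw [mul_one] at this
  rw [this, mul_comm]
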